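/- Exclusion of historical data when nowcasters dominate: let σ > 0 and 0 < c < (1+σ²)². For λ ∈ (0,1] define the second-best (discrimination) objective G_λ(n0,n1) = λ·V_S(n0,n1) + (1−λ)·V_L(n0,0) − c·(n0+n1) on [0,∞)×[0,∞). Then there exists λ̄ ∈ (0,1) such that for every λ ∈ (λ̄, 1], every maximizer (n0, n1) of G_λ over [0,∞)×[0,∞) satisfies n0 = 0 and n1 > 0. -/

import Mathlib

/-- The denominator `D(n0,n1) = σ²(n0+n1+2 n0 n1) + (1+n0)(1+n1)`. -/
noncomputable def Dden (σ n0 n1 : ℝ) : ℝ :=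
  σ^2 * (n0 + n1 + 2*n0*n1) + (1+n0)*(1+n1)

/-- Forecaster value `V_L`. -/
noncomputable def VL (σ n0 n1 : ℝ) : ℝ :=
  σ^4 * (n0 + n1 + 2*n0*n1) / Dden σ n0 n1

/-- Nowcaster value `V_S`. -/
noncomputable def VS (σ n0 n1 : ℝ) : ℝ :=
  VL σ n0 n1 + (3*σ^2*n0*n1 + 2*σ^2*n1 + n1 + n0*n1) / Dden σ n0 n1

lemma aux_D1 (σ n0 n1 : ℝ) (h0 : 0 ≤ n0) (h1 : 0 ≤ n1) : 1 ≤ Dden σ n0 n1 := by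
  have h : 0 ≤ σ^2 * (n0+n1+2*n0*n1) :=
    mul_nonneg (sq_nonneg σ) (by nlinarith [mul_nonneg h0 h1])
  unfold Dden; nlinarith [mul_nonneg h0 h1]

lemma aux_Dpos (σ n0 n1 : ℝ) (h0 : 0 ≤ n0) (h1 : 0 ≤ n1) : 0 < Dden σ n0 n1 :=
  lt_of_lt_of_le one_pos (aux_D1 σ n0 n1 h0 h1)

lemma aux_VS_eq (σ n0 n1 : ℝ) : VS σ n0 n1 =
    (σ^4*(n0+n1+2*n0*n1) + (3*σ^2*n0*n1 + 2*σ^2*n1 + n1 + n0*n1)) / Dden σ n0 n1 := by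
  unfold VS VL; rw [← add_div]

lemma aux_VS_nonneg (σ n0 n1 : ℝ) (h0 : 0 ≤ n0) (h1 : 0 ≤ n1) : 0 ≤ VS σ n0 n1 := by
  rw [aux_VS_eq]
  apply div_nonneg _ (le_of_lt (aux_Dpos σ n0 n1 h0 h1))
  nlinarith [mul_nonneg h0 h1, sq_nonneg σ, sq_nonneg (σ^2),
    mul_nonneg (sq_nonneg (σ^2)) h0, mul_nonneg (sq_nonneg (σ^2)) h1,
    mul_nonneg (mul_nonneg (sq_nonneg (σ^2)) h0) h1,
    mul_nonneg (mul_nonneg (sq_nonneg σ) h0) h1,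
    mul_nonneg (sq_nonneg σ) h1]

lemma aux_VS_le (σ n0 n1 : ℝ) (h0 : 0 ≤ n0) (h1 : 0 ≤ n1) : VS σ n0 n1 ≤ 1+σ^2 := by
  rw [aux_VS_eq, div_le_iff₀ (aux_Dpos σ n0 n1 h0 h1)]
  unfold Dden
  nlinarith [sq_nonneg σ, mul_nonneg (sq_nonneg σ) h0]

lemma aux_VL0_nonneg (σ n0 : ℝ) (h0 : 0 ≤ n0) : 0 ≤ VL σ n0 0 := by
  unfold VL
  apply div_nonneg _ (le_of_lt (aux_Dpos σ n0 0 h0 le_rfl))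
  nlinarith [mul_nonneg (sq_nonneg (σ^2)) h0]

lemma aux_VL0_le (σ n0 : ℝ) (h0 : 0 ≤ n0) : VL σ n0 0 ≤ σ^4 := by
  unfold VL
  rw [div_le_iff₀ (aux_Dpos σ n0 0 h0 le_rfl)]
  unfold Dden
  nlinarith [sq_nonneg (σ^2), mul_nonneg (mul_nonneg (sq_nonneg σ) (sq_nonneg (σ^2))) h0]

lemma aux_VL0_le_mul (σ n0 : ℝ) (h0 : 0 ≤ n0) : VL σ n0 0 ≤ σ^4 * n0 := by
  unfold VL
  rw [div_le_iff₀ (aux_Dpos σ n0 0 h0 le_rfl)]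
  have hD := aux_D1 σ n0 0 h0 le_rfl
  nlinarith [mul_le_mul_of_nonneg_left hD (mul_nonneg (sq_nonneg (σ^2)) h0)]

lemma aux_VS00 (σ : ℝ) : VS σ 0 0 = 0 := by simp [VS, VL, Dden]

lemma aux_VL00 (σ : ℝ) : VL σ 0 0 = 0 := by simp [VL, Dden]

lemma aux_VS_diff (σ n0 n1 : ℝ) (h0 : 0 ≤ n0) (h1 : 0 ≤ n1) :
    VS σ 0 (n0+n1) - VS σ n0 n1
      = n0*(1+2*σ^2)*(1+(1+σ^2)*n0) / (Dden σ n0 n1 * Dden σ 0 (n0+n1)) := by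
  have hs : (0:ℝ) ≤ n0 + n1 := by linarith
  have hd1 : Dden σ n0 n1 ≠ 0 := ne_of_gt (aux_Dpos σ n0 n1 h0 h1)
  have hd2 : Dden σ 0 (n0+n1) ≠ 0 := ne_of_gt (aux_Dpos σ 0 (n0+n1) le_rfl hs)
  rw [aux_VS_eq, aux_VS_eq]
  rw [div_sub_div _ _ hd2 hd1, div_eq_div_iff (mul_ne_zero hd2 hd1) (mul_ne_zero hd1 hd2)]
  unfold Dden
  ring

set_option maxHeartbeats 1000000 in
/-- Exclusion of historical data when nowcasters dominate: for `λ` close enough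
to `1`, every maximizer of the discrimination objective has `n0 = 0 < n1`. -/
theorem stmt19 (σ c : ℝ) (hσ : 0 < σ) (hc0 : 0 < c) (hc : c < (1+σ^2)^2) :
    ∃ lamBar : ℝ, lamBar ∈ Set.Ioo (0:ℝ) 1 ∧
      ∀ lam : ℝ, lamBar < lam → lam ≤ 1 →
        ∀ n0 n1 : ℝ, 0 ≤ n0 → 0 ≤ n1 →
          (∀ m0 m1 : ℝ, 0 ≤ m0 → 0 ≤ m1 →
            lam * VS σ m0 m1 + (1-lam) * VL σ m0 0 - c*(m0+m1) ≤
            lam * VS σ n0 n1 + (1-lam) * VL σ n0 0 - c*(n0+n1)) →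
          n0 = 0 ∧ 0 < n1 := by
  have hA : (0:ℝ) < 1+σ^2 := by positivity
  obtain ⟨B, hBdef⟩ : ∃ x:ℝ, x = (1+σ^2+σ^4)/c := ⟨_, rfl⟩
  have hBpos : 0 < B := by rw [hBdef]; positivity
  obtain ⟨Dbar, hDbardef⟩ : ∃ x:ℝ, x = σ^2*(B+2*B^2)+(1+B)^2 := ⟨_, rfl⟩
  have hDbar1 : 1 ≤ Dbar := by rw [hDbardef]; nlinarith [mul_nonneg (sq_nonneg σ) (by nlinarith : (0:ℝ) ≤ B+2*B^2)]
  have hDbarpos : 0 < Dbar := lt_of_lt_of_le one_pos hDbar1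
  obtain ⟨K, hKdef⟩ : ∃ x:ℝ, x = (1+2*σ^2)/(Dbar^2) := ⟨_, rfl⟩
  have hKpos : 0 < K := by
    rw [hKdef]; exact div_pos (by positivity) (by positivity)
  obtain ⟨c', hc'def⟩ : ∃ x:ℝ, x = (c+(1+σ^2)^2)/2 := ⟨_, rfl⟩
  have hc'c : c < c' := by simp only [hc'def]; linarith
  have hc'lt : c' < (1+σ^2)^2 := by simp only [hc'def]; linarith
  have hc'pos : 0 < c' := lt_trans hc0 hc'c
  obtain ⟨t0, ht0def⟩ : ∃ x:ℝ, x = ((1+σ^2)^2/c' - 1)/(1+σ^2) := ⟨_, rfl⟩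
  have ht0 : 0 < t0 := by
    rw [ht0def]
    apply div_pos _ hA
    have : 1 < (1+σ^2)^2/c' := (one_lt_div hc'pos).mpr hc'lt
    linarith
  have hDt0 : Dden σ 0 t0 = (1+σ^2)^2/c' := by
    rw [ht0def]; simp only [Dden]
    field_simp
    ring
  have hVSt0 : VS σ 0 t0 = c' * t0 := by
    rw [aux_VS_eq, hDt0]
    rw [div_div_eq_mul_div, div_eq_iff (ne_of_gt (by positivity : (0:ℝ) < (1+σ^2)^2))]
    ring
  refine ⟨max (σ^4/(σ^4+K)) (max (c/c') (1/2)), ⟨?_, ?_⟩, ?_⟩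
  · exact lt_of_lt_of_le (by norm_num) (le_trans (le_max_right _ _) (le_max_right _ _))
  · apply max_lt
    · exact (div_lt_one (by positivity)).mpr (by linarith)
    · exact max_lt ((div_lt_one hc'pos).mpr hc'c) (by norm_num)
  intro lam hlam hlam1 n0 n1 h0 h1 hmax
  have hlam_half : 1/2 < lam :=
    lt_of_le_of_lt (le_trans (le_max_right _ _) (le_max_right _ _)) hlam
  have hlam0 : 0 < lam := by linarith
  have hlamK : σ^4 < lam*(σ^4+K) := by
    have h := lt_of_le_of_lt (le_max_left (σ^4/(σ^4+K)) _) hlam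
    exact (div_lt_iff₀ (by positivity)).mp h
  have hlamc : c < lam*c' := by
    have h := lt_of_le_of_lt (le_trans (le_max_left (c/c') (1/2)) (le_max_right (σ^4/(σ^4+K)) _)) hlam
    exact (div_lt_iff₀ hc'pos).mp h
  -- Step 1: bound n0+n1 ≤ B using the maximizer property at (0,0)
  have h00 := hmax 0 0 le_rfl le_rfl
  rw [aux_VS00, aux_VL00] at h00
  have hsB : n0 + n1 ≤ B := by
    have hVS := aux_VS_le σ n0 n1 h0 h1
    have hVSnn := aux_VS_nonneg σ n0 n1 h0 h1
    have hVL := aux_VL0_le σ n0 h0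
    have hVLnn := aux_VL0_nonneg σ n0 h0
    have h1l : lam * VS σ n0 n1 ≤ 1+σ^2 := by nlinarith
    have h2l : (1-lam) * VL σ n0 0 ≤ σ^4 := by nlinarith [sq_nonneg (σ^2)]
    have hcn : c*(n0+n1) ≤ 1+σ^2+σ^4 := by
      simp only [mul_zero, zero_add, add_zero, mul_zero, sub_zero] at h00
      nlinarith [h00]
    rw [hBdef, le_div_iff₀ hc0]
    linarith [hcn]
  -- Step 2: n0 = 0
  have hn0 : n0 = 0 := by
    by_contra hne
    have hn0pos : 0 < n0 := lt_of_le_of_ne h0 (Ne.symm hne)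
    have hm := hmax 0 (n0+n1) le_rfl (by linarith)
    rw [aux_VL00] at hm
    have hn0B : n0 ≤ B := by linarith
    have hn1B : n1 ≤ B := by linarith
    have hD1le : Dden σ n0 n1 ≤ Dbar := by
      simp only [Dden, hDbardef]
      have hnn : n0*n1 ≤ B*B := mul_le_mul hn0B hn1B h1 (le_of_lt hBpos)
      have := mul_le_mul_of_nonneg_left
        (show n0+n1+2*(n0*n1) ≤ B+2*B^2 by nlinarith) (sq_nonneg σ)
      nlinarith
    have hD2le : Dden σ 0 (n0+n1) ≤ Dbar := by
      simp only [Dden, hDbardef]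
      have := mul_le_mul_of_nonneg_left
        (show 0+(n0+n1)+2*0*(n0+n1) ≤ B+2*B^2 by nlinarith) (sq_nonneg σ)
      nlinarith
    have hD1pos := aux_Dpos σ n0 n1 h0 h1
    have hD2pos := aux_Dpos σ 0 (n0+n1) le_rfl (by linarith)
    have hdiff : K*n0 ≤ VS σ 0 (n0+n1) - VS σ n0 n1 := by
      rw [aux_VS_diff σ n0 n1 h0 h1]
      have heq : K*n0 = (n0*(1+2*σ^2))/(Dbar*Dbar) := by
        rw [hKdef]; field_simp
      rw [heq]
      have h1' : (0:ℝ) ≤ n0*(1+2*σ^2) := mul_nonneg h0 (by positivity)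
      have h2' : (1:ℝ) ≤ 1+(1+σ^2)*n0 := by
        have := mul_nonneg (le_of_lt hA) h0
        linarith
      apply div_le_div₀
      · exact mul_nonneg h1' (by linarith)
      · nlinarith [mul_le_mul_of_nonneg_left h2' h1']
      · exact mul_pos hD1pos hD2pos
      · exact mul_le_mul hD1le hD2le (le_of_lt hD2pos) (le_of_lt hDbarpos)
    -- from hm: lam*(VS(0,s) - VS(n0,n1)) ≤ (1-lam)*VL(n0,0)
    have hm' : lam*(VS σ 0 (n0+n1) - VS σ n0 n1) ≤ (1-lam)*VL σ n0 0 := by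
      have : c*(0+(n0+n1)) = c*(n0+n1) := by ring
      rw [this] at hm
      linarith [hm]
    have hVLmul := aux_VL0_le_mul σ n0 h0
    have hub : lam*(K*n0) ≤ (1-lam)*(σ^4*n0) := by
      have e1 : lam*(K*n0) ≤ lam*(VS σ 0 (n0+n1) - VS σ n0 n1) :=
        mul_le_mul_of_nonneg_left hdiff (le_of_lt hlam0)
      have e2 : (1-lam)*VL σ n0 0 ≤ (1-lam)*(σ^4*n0) :=
        mul_le_mul_of_nonneg_left hVLmul (by linarith)
      linarith
    have hlb : (1-lam)*(σ^4*n0) < lam*(K*n0) := by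
      have expand : lam*(K*n0) - (1-lam)*(σ^4*n0) = n0*(lam*(σ^4+K) - σ^4) := by ring
      have hp := mul_pos hn0pos (show (0:ℝ) < lam*(σ^4+K) - σ^4 by linarith)
      linarith [hp, expand]
    exact absurd hub (not_le.mpr hlb)
  -- Step 3: n1 > 0
  subst hn0
  refine ⟨rfl, ?_⟩
  rcases eq_or_lt_of_le h1 with heq | hlt
  · exfalso
    have hmt := hmax 0 t0 le_rfl (le_of_lt ht0)
    rw [← heq] at hmt
    rw [aux_VS00, aux_VL00, hVSt0] at hmt
    have expand : lam*(c'*t0) - c*t0 = t0*(lam*c' - c) := by ring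
    have hp := mul_pos ht0 (show (0:ℝ) < lam*c' - c by linarith)
    linarith [hmt, hp, expand]
  · exact hlt
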